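/- Let N = N(Q_n, m, r) be a quasi Q_n-filiform Lie algebra and δ a derivation of N. Then for every 1 ≤ s ≤ m and every 2 ≤ t ≤ n-1, δ e_{st} = λ_{s,t-1} e_{st} + Σ_{j=2}^{n-t} c^{s1}_{sj} e_{s,j+t-1} + (-1)^t c^{s0}_{s,n-t+1} e_{sn}, where λ_{s,t-1} = (t-1)·c^{s0}_{s0} + c^{s1}_{s1}. -/

import Mathlib

open Finset

/-- A quasi `Qₙ`-filiform Lie algebra `N = N(Qₙ, m, r)`: a finite-dimensional complex
nilpotent Lie algebra which is the sum of `m` pairwise commuting subalgebras, each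
isomorphic to the filiform Lie algebra `Qₙ` with basis `e i 0, …, e i n` satisfying the
`Qₙ` bracket relations, and such that
`{e 1 0, …, e 1 (n-1), …, e m 0, …, e m (n-1), e 1 n, …, e r n}` is a basis of `N`,
where `r = dim c^{n-1} N`. -/
structure QuasiQnFiliform (n m r : ℕ) (N : Type*) [LieRing N] [LieAlgebra ℂ N] : Type _ where
  /-- the distinguished vectors `e_{ij}`, for `1 ≤ i ≤ m`, `0 ≤ j ≤ n` -/
  e : ℕ → ℕ → N
  /-- `N` is nilpotent -/
  nilpotent : LieRing.IsNilpotent N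
  /-- `N` is finite-dimensional -/
  findim : FiniteDimensional ℂ N
  /-- `[e_{i0}, e_{ij}] = e_{i,j+1}` for `1 ≤ j ≤ n - 2` -/
  bracket_e0 : ∀ i j, 1 ≤ i → i ≤ m → 1 ≤ j → j ≤ n - 2 → ⁅e i 0, e i j⁆ = e i (j + 1)
  /-- `[e_{i0}, e_{i,n-1}] = 0` -/
  bracket_e0_top : ∀ i, 1 ≤ i → i ≤ m → ⁅e i 0, e i (n - 1)⁆ = 0
  /-- `[e_{i0}, e_{in}] = 0` -/
  bracket_e0_n : ∀ i, 1 ≤ i → i ≤ m → ⁅e i 0, e i n⁆ = 0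
  /-- `[e_{ij}, e_{i,n-j}] = (-1)^j e_{in}` for `1 ≤ j ≤ n - 1` -/
  bracket_pair : ∀ i j, 1 ≤ i → i ≤ m → 1 ≤ j → j ≤ n - 1 →
    ⁅e i j, e i (n - j)⁆ = ((-1 : ℂ)) ^ j • e i n
  /-- all remaining brackets inside a component vanish -/
  bracket_zero : ∀ i j k, 1 ≤ i → i ≤ m → 1 ≤ j → j ≤ n → 1 ≤ k → k ≤ n → j + k ≠ n →
    ⁅e i j, e i k⁆ = 0
  /-- distinct components commute: `[N_i, N_{i'}] = 0` -/
  bracket_comm : ∀ i i' j j', 1 ≤ i → i ≤ m → 1 ≤ i' → i' ≤ m → i ≠ i' → j ≤ n → j' ≤ n →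
    ⁅e i j, e i' j'⁆ = 0
  /-- `{e_{i0}, …, e_{in}}` is linearly independent (each `Nᵢ ≅ Qₙ` has it as a basis) -/
  indep_comp : ∀ i, 1 ≤ i → i ≤ m → LinearIndependent ℂ (fun j : Fin (n + 1) => e i (j : ℕ))
  /-- the distinguished family is linearly independent … -/
  basis_indep : LinearIndependent ℂ
    (Sum.elim (fun p : Fin m × Fin n => e ((p.1 : ℕ) + 1) (p.2 : ℕ))
      (fun t : Fin r => e ((t : ℕ) + 1) n))
  /-- … and spans `N`, i.e. it is a basis of `N` (in particular `N = N₁ + ⋯ + N_m`) -/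
  basis_span : Submodule.span ℂ (Set.range
    (Sum.elim (fun p : Fin m × Fin n => e ((p.1 : ℕ) + 1) (p.2 : ℕ))
      (fun t : Fin r => e ((t : ℕ) + 1) n))) = ⊤
  /-- `r = dim c^{n-1} N` -/
  rank_lcs : Module.finrank ℂ (LieModule.lowerCentralSeries ℂ N N (n - 1)) = r

open Finset in
/-- Let `δ` be a derivation of a quasi `Qₙ`-filiform Lie algebra `N = N(Qₙ, m, r)`, with
`δ e_{st} = Σ_{i=1}^m Σ_{j=0}^{n-1} c^{st}_{ij} e_{ij} + Σ_{i=1}^r c^{st}_{in} e_{in}`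
for `t = 0, 1`.  Then for all `1 ≤ s ≤ m` and `2 ≤ t ≤ n - 1`,
`δ e_{st} = λ_{s,t-1} e_{st} + Σ_{j=2}^{n-t} c^{s1}_{sj} e_{s,j+t-1}
  + (-1)^t c^{s0}_{s,n-t+1} e_{sn}`,
where `λ_{s,t-1} = (t-1) c^{s0}_{s0} + c^{s1}_{s1}`. -/

lemma mySumLie {L : Type*} [LieRing L] {ι : Type*} (s : Finset ι) (f : ι → L) (y : L) :
    ⁅(∑ i ∈ s, f i : L), y⁆ = ∑ i ∈ s, ⁅f i, y⁆ := by
  induction s using Finset.cons_induction with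
  | empty => simp
  | cons a s h ih => simp [Finset.sum_cons, add_lie, ih]

lemma myLieSum {L : Type*} [LieRing L] {ι : Type*} (s : Finset ι) (f : ι → L) (y : L) :
    ⁅y, (∑ i ∈ s, f i : L)⁆ = ∑ i ∈ s, ⁅y, f i⁆ := by
  induction s using Finset.cons_induction with
  | empty => simp
  | cons a s h ih => simp [Finset.sum_cons, lie_add, ih]

lemma mySumTwo {M : Type*} [AddCommMonoid M] {ι : Type*} [DecidableEq ι] {s : Finset ι}
    {f : ι → M} {a b : ι} (ha : a ∈ s) (hb : b ∈ s) (hab : a ≠ b)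
    (h : ∀ x ∈ s, x ≠ a → x ≠ b → f x = 0) :
    ∑ x ∈ s, f x = f a + f b := by
  have hsub : ({a, b} : Finset ι) ⊆ s := by
    intro x hx; simp only [Finset.mem_insert, Finset.mem_singleton] at hx
    rcases hx with rfl | rfl <;> assumption
  rw [← Finset.sum_subset hsub, Finset.sum_pair hab]
  intro x hx hnx
  simp only [Finset.mem_insert, Finset.mem_singleton, not_or] at hnx
  exact h x hx hnx.1 hnx.2

lemma myNegOnePow {a b k : ℕ} (h : a + b = 2 * k) : ((-1 : ℂ)) ^ a = (-1) ^ b := by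
  have h1 : ((-1 : ℂ)) ^ (a + b) = 1 := by
    rw [h, pow_mul]; norm_num
  have h2 : ((-1 : ℂ)) ^ b * (-1) ^ b = 1 := by
    rw [← pow_add, ← two_mul, pow_mul]; norm_num
  calc ((-1 : ℂ)) ^ a = (-1) ^ a * ((-1) ^ b * (-1) ^ b) := by rw [h2, mul_one]
    _ = ((-1) ^ (a + b)) * (-1) ^ b := by rw [pow_add]; ring
    _ = (-1) ^ b := by rw [h1, one_mul]

lemma auxPair {n m r : ℕ} {N : Type*} [LieRing N] [LieAlgebra ℂ N]
    (Q : QuasiQnFiliform n m r N) (s u : ℕ) (hs1 : 1 ≤ s) (hsm : s ≤ m)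
    (hu1 : 1 ≤ u) (hu : u ≤ n - 2) :
    ⁅Q.e s (n - u), Q.e s u⁆ = ((-1 : ℂ)) ^ (n - u) • Q.e s n := by
  have h := Q.bracket_pair s (n - u) hs1 hsm (by omega) (by omega)
  rwa [show n - (n - u) = u from by omega] at h

lemma auxBr1 {n m r : ℕ} {N : Type*} [LieRing N] [LieAlgebra ℂ N]
    (Q : QuasiQnFiliform n m r N) (hrm : r ≤ m) (hn5 : 5 ≤ n)
    (c0 : ℕ → ℕ → ℂ) (s u : ℕ) (hs1 : 1 ≤ s) (hsm : s ≤ m) (hu1 : 1 ≤ u) (hu : u ≤ n - 2) :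
    ⁅(∑ i ∈ Icc 1 m, ∑ j ∈ range n, c0 i j • Q.e i j) + ∑ i ∈ Icc 1 r, c0 i n • Q.e i n,
      Q.e s u⁆
    = c0 s 0 • Q.e s (u + 1) + ((-1 : ℂ) ^ (n - u) * c0 s (n - u)) • Q.e s n := by
  rw [add_lie, mySumLie, mySumLie]
  have h2 : ∑ i ∈ Icc 1 r, ⁅c0 i n • Q.e i n, Q.e s u⁆ = 0 := by
    refine Finset.sum_eq_zero fun i hi => ?_
    simp only [mem_Icc] at hi
    rw [smul_lie]
    rcases eq_or_ne i s with rfl | hne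
    · rw [Q.bracket_zero i n u hi.1 (le_trans hi.2 hrm) (by omega) le_rfl hu1 (by omega)
        (by omega), smul_zero]
    · rw [Q.bracket_comm i s n u hi.1 (le_trans hi.2 hrm) hs1 hsm hne le_rfl (by omega),
        smul_zero]
  rw [h2, add_zero]
  rw [Finset.sum_eq_single_of_mem s (mem_Icc.mpr ⟨hs1, hsm⟩) (fun i hi hne => ?_)]
  · rw [mySumLie]
    rw [mySumTwo (a := 0) (b := n - u) (by simp; omega) (by simp [Finset.mem_range]; omega)
      (by omega) (fun j hj hj0 hju => ?_)]
    · rw [smul_lie, smul_lie, Q.bracket_e0 s u hs1 hsm hu1 hu,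
        auxPair Q s u hs1 hsm hu1 hu]
      rw [smul_smul, mul_comm]
    · simp only [Finset.mem_range] at hj
      rw [smul_lie, Q.bracket_zero s j u hs1 hsm (by omega) (by omega) hu1 (by omega)
        (by omega), smul_zero]
  · rw [mySumLie]
    refine Finset.sum_eq_zero fun j hj => ?_
    simp only [Finset.mem_range] at hj
    simp only [mem_Icc] at hi
    rw [smul_lie, Q.bracket_comm i s j u hi.1 hi.2 hs1 hsm hne (by omega) (by omega), smul_zero]

lemma auxBr2 {n m r : ℕ} {N : Type*} [LieRing N] [LieAlgebra ℂ N]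
    (Q : QuasiQnFiliform n m r N) (hrm : r ≤ m) (hn5 : 5 ≤ n)
    (c1 : ℕ → ℕ → ℂ) (s : ℕ) (hs1 : 1 ≤ s) (hsm : s ≤ m) :
    ⁅Q.e s 0, (∑ i ∈ Icc 1 m, ∑ j ∈ range n, c1 i j • Q.e i j)
      + ∑ i ∈ Icc 1 r, c1 i n • Q.e i n⁆
    = ∑ j ∈ Icc 1 (n - 2), c1 s j • Q.e s (j + 1) := by
  rw [lie_add, myLieSum, myLieSum]
  have h2 : ∑ i ∈ Icc 1 r, ⁅Q.e s 0, c1 i n • Q.e i n⁆ = 0 := by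
    refine Finset.sum_eq_zero fun i hi => ?_
    simp only [mem_Icc] at hi
    rw [lie_smul]
    rcases eq_or_ne s i with rfl | hne
    · rw [Q.bracket_e0_n s hs1 hsm, smul_zero]
    · rw [Q.bracket_comm s i 0 n hs1 hsm hi.1 (le_trans hi.2 hrm) hne (by omega) le_rfl,
        smul_zero]
  rw [h2, add_zero]
  rw [Finset.sum_eq_single_of_mem s (mem_Icc.mpr ⟨hs1, hsm⟩) (fun i hi hne => ?_)]
  · rw [myLieSum]
    have hsub : Icc 1 (n - 2) ⊆ range n := by
      intro x hx; simp only [mem_Icc] at hx; simp only [Finset.mem_range]; omega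
    have hzero : ∀ j ∈ range n, j ∉ Icc 1 (n - 2) → ⁅Q.e s 0, c1 s j • Q.e s j⁆ = 0 := by
      intro j hj hj'
      simp only [Finset.mem_range] at hj
      simp only [mem_Icc, not_and_or, not_le] at hj'
      rw [lie_smul]
      rcases eq_or_ne j 0 with rfl | hj0
      · rw [lie_self, smul_zero]
      · have : j = n - 1 := by omega
        rw [this, Q.bracket_e0_top s hs1 hsm, smul_zero]
    rw [← Finset.sum_subset hsub hzero]
    refine Finset.sum_congr rfl fun j hj => ?_
    simp only [mem_Icc] at hj
    rw [lie_smul, Q.bracket_e0 s j hs1 hsm hj.1 hj.2]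
  · rw [myLieSum]
    refine Finset.sum_eq_zero fun j hj => ?_
    simp only [Finset.mem_range] at hj
    simp only [mem_Icc] at hi
    rw [lie_smul, Q.bracket_comm s i 0 j hs1 hsm hi.1 hi.2 (Ne.symm hne) (by omega) (by omega),
      smul_zero]

open Finset in
theorem derivation_apply_e_middle
    (n d m r : ℕ) (hn : n = 2 * d + 1) (hd : 2 ≤ d)
    (hm : 1 ≤ m) (hr : 1 ≤ r) (hrm : r ≤ m)
    (N : Type*) [LieRing N] [LieAlgebra ℂ N] (Q : QuasiQnFiliform n m r N)
    (δ : LieDerivation ℂ N N) (c : ℕ → ℕ → ℕ → ℕ → ℂ)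
    (hc : ∀ s t, 1 ≤ s → s ≤ m → t ≤ 1 →
      δ (Q.e s t) = ∑ i ∈ Icc 1 m, ∑ j ∈ range n, c s t i j • Q.e i j
        + ∑ i ∈ Icc 1 r, c s t i n • Q.e i n) :
    ∀ s t, 1 ≤ s → s ≤ m → 2 ≤ t → t ≤ n - 1 →
      δ (Q.e s t) = (((t - 1 : ℕ) : ℂ) * c s 0 s 0 + c s 1 s 1) • Q.e s t
        + ∑ j ∈ Icc 2 (n - t), c s 1 s j • Q.e s (j + t - 1)
        + ((-1 : ℂ) ^ t * c s 0 s (n - t + 1)) • Q.e s n := by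
  intro s t hs1 hsm ht2
  have hn5 : 5 ≤ n := by omega
  induction t, ht2 using Nat.le_induction with
  | base =>
    intro htn
    have he2 : Q.e s 2 = ⁅Q.e s 0, Q.e s 1⁆ :=
      (Q.bracket_e0 s 1 hs1 hsm le_rfl (by omega)).symm
    conv_lhs => rw [he2]
    rw [δ.apply_lie_eq_add, hc s 1 hs1 hsm le_rfl, hc s 0 hs1 hsm (by omega)]
    rw [auxBr1 Q hrm hn5 (c s 0) s 1 hs1 hsm le_rfl (by omega)]
    rw [auxBr2 Q hrm hn5 (c s 1) s hs1 hsm]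
    rw [show Icc 1 (n - 2) = insert 1 (Icc 2 (n - 2)) from by
      ext x; simp only [mem_Icc, Finset.mem_insert]; omega,
      Finset.sum_insert (by simp only [mem_Icc]; omega)]
    rw [show n - 2 + 1 = n - 1 from by omega]
    rw [myNegOnePow (a := n - 1) (b := 2) (k := d + 1) (by omega)]
    have hone : ((2 - 1 : ℕ) : ℂ) = 1 := by norm_num
    rw [hone]
    simp only [show ∀ j : ℕ, j + 2 - 1 = j + 1 from fun j => rfl,
      show (1 + 1 : ℕ) = 2 from rfl]
    module
  | succ t ht IH =>
    intro htn
    have IH' := IH (by omega)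
    have he : Q.e s (t + 1) = ⁅Q.e s 0, Q.e s t⁆ :=
      (Q.bracket_e0 s t hs1 hsm (by omega) (by omega)).symm
    conv_lhs => rw [he]
    rw [δ.apply_lie_eq_add, IH', hc s 0 hs1 hsm (by omega)]
    rw [auxBr1 Q hrm hn5 (c s 0) s t hs1 hsm (by omega) (by omega)]
    rw [lie_add, lie_add, lie_smul, lie_smul, myLieSum]
    rw [Q.bracket_e0 s t hs1 hsm (by omega) (by omega), Q.bracket_e0_n s hs1 hsm, smul_zero,
      add_zero]
    have hsum : ∑ j ∈ Icc 2 (n - t), ⁅Q.e s 0, c s 1 s j • Q.e s (j + t - 1)⁆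
        = ∑ j ∈ Icc 2 (n - (t + 1)), c s 1 s j • Q.e s (j + (t + 1) - 1) := by
      rw [show Icc 2 (n - t) = insert (n - t) (Icc 2 (n - (t + 1))) from by
        ext x; simp only [mem_Icc, Finset.mem_insert]; omega,
        Finset.sum_insert (by simp only [mem_Icc]; omega)]
      have h1 : ⁅Q.e s 0, c s 1 s (n - t) • Q.e s ((n - t) + t - 1)⁆ = 0 := by
        rw [lie_smul, show (n - t) + t - 1 = n - 1 from by omega,
          Q.bracket_e0_top s hs1 hsm, smul_zero]
      rw [h1, zero_add]
      refine Finset.sum_congr rfl fun j hj => ?_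
      simp only [mem_Icc] at hj
      rw [lie_smul, Q.bracket_e0 s (j + t - 1) hs1 hsm (by omega) (by omega),
        show j + t - 1 + 1 = j + (t + 1) - 1 from by omega]
    rw [hsum]
    rw [show n - (t + 1) + 1 = n - t from by omega]
    rw [myNegOnePow (a := n - t) (b := t + 1) (k := d + 1) (by omega)]
    have hcast : ((t - 1 : ℕ) : ℂ) = (t : ℂ) - 1 := by
      push_cast [Nat.cast_sub (show 1 ≤ t by omega)]; ring
    have hcast2 : ((t + 1 - 1 : ℕ) : ℂ) = (t : ℂ) := by norm_num
    rw [hcast, hcast2]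
    module
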